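/- Let S be a nonempty finite set, T : S → S → ℝ a row-stochastic matrix with limiting matrix Π := lim_{t→∞} (1/t) Σ_{k=0}^{t-1} T^k, and let r : S → ℝ be any vector (charge). Define g := Π r and h := (I − T + Π)^{-1} (I − Π) r. Then the pair (g, h) solves the Poisson equation with charge r: g = T g and g + h − T h = r. -/

import Mathlib

open Filter Topology

/-- **A solution to the Poisson equation.**
Let `P` be the limiting (Cesaro) matrix of a row-stochastic matrix `T` and `r` any charge.
Then `g := P r` and `h := (I - T + P)⁻¹ (I - P) r` solve the Poisson equation:
`g = T g` and `g + h - T h = r`. -/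
theorem poisson_equation_solution {S : Type*} [Fintype S] [Nonempty S] [DecidableEq S]
    (T P : Matrix S S ℝ)
    (hnn : ∀ s s', 0 ≤ T s s') (hrow : ∀ s, ∑ s', T s s' = 1)
    (hP : ∀ s s' : S,
      Tendsto (fun t : ℕ => (t : ℝ)⁻¹ * ∑ k ∈ Finset.range t, (T ^ k) s s')
        atTop (nhds (P s s')))
    (r : S → ℝ) :
    P.mulVec r = T.mulVec (P.mulVec r) ∧
    P.mulVec r + (1 - T + P)⁻¹.mulVec ((1 - P).mulVec r)
      - T.mulVec ((1 - T + P)⁻¹.mulVec ((1 - P).mulVec r)) = r := by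
  classical
  -- powers of T are nonnegative with row sums 1
  have hpow_nn : ∀ k (s s' : S), 0 ≤ (T ^ k) s s' := by
    intro k
    induction k with
    | zero => intro s s'; by_cases h : s = s' <;> simp [Matrix.one_apply, h]
    | succ k ih =>
      intro s s'
      rw [pow_succ, Matrix.mul_apply]
      exact Finset.sum_nonneg fun i _ => mul_nonneg (ih s i) (hnn i s')
  have hpow_row : ∀ k (s : S), ∑ s', (T ^ k) s s' = 1 := by
    intro k
    induction k with
    | zero => intro s; simp [Matrix.one_apply]
    | succ k ih =>
      intro s
      simp only [pow_succ, Matrix.mul_apply]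
      rw [Finset.sum_comm]
      simp_rw [← Finset.mul_sum, hrow, mul_one]
      exact ih s
  have hpow_le : ∀ k (s s' : S), (T ^ k) s s' ≤ 1 := by
    intro k s s'
    calc (T ^ k) s s' ≤ ∑ s'', (T ^ k) s s'' :=
          Finset.single_le_sum (fun i _ => hpow_nn k s i) (Finset.mem_univ s')
      _ = 1 := hpow_row k s
  set f : ℕ → S → S → ℝ := fun t s s' => (t : ℝ)⁻¹ * ∑ k ∈ Finset.range t, (T ^ k) s s' with hf
  -- two sum-manipulation helpers
  have hL : ∀ (u : S → ℝ) (t : ℕ) (s' : S),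
      ∑ i, u i * f t i s' = (t : ℝ)⁻¹ * ∑ k ∈ Finset.range t, ∑ i, u i * (T ^ k) i s' := by
    intro u t s'
    simp only [hf]
    calc ∑ i, u i * ((t : ℝ)⁻¹ * ∑ k ∈ Finset.range t, (T ^ k) i s')
        = ∑ i, ∑ k ∈ Finset.range t, (t : ℝ)⁻¹ * (u i * (T ^ k) i s') := by
          refine Finset.sum_congr rfl fun i _ => ?_
          rw [Finset.mul_sum, Finset.mul_sum]
          exact Finset.sum_congr rfl fun k _ => by ring
      _ = ∑ k ∈ Finset.range t, ∑ i, (t : ℝ)⁻¹ * (u i * (T ^ k) i s') := Finset.sum_comm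
      _ = (t : ℝ)⁻¹ * ∑ k ∈ Finset.range t, ∑ i, u i * (T ^ k) i s' := by
          rw [Finset.mul_sum]
          exact Finset.sum_congr rfl fun k _ => by rw [Finset.mul_sum]
  have hR : ∀ (w : S → ℝ) (t : ℕ) (s : S),
      ∑ i, f t s i * w i = (t : ℝ)⁻¹ * ∑ k ∈ Finset.range t, ∑ i, (T ^ k) s i * w i := by
    intro w t s
    simp only [hf]
    calc ∑ i, ((t : ℝ)⁻¹ * ∑ k ∈ Finset.range t, (T ^ k) s i) * w i
        = ∑ i, ∑ k ∈ Finset.range t, (t : ℝ)⁻¹ * ((T ^ k) s i * w i) := by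
          refine Finset.sum_congr rfl fun i _ => ?_
          rw [mul_assoc, Finset.sum_mul, Finset.mul_sum]
      _ = ∑ k ∈ Finset.range t, ∑ i, (t : ℝ)⁻¹ * ((T ^ k) s i * w i) := Finset.sum_comm
      _ = (t : ℝ)⁻¹ * ∑ k ∈ Finset.range t, ∑ i, (T ^ k) s i * w i := by
          rw [Finset.mul_sum]
          exact Finset.sum_congr rfl fun k _ => by rw [Finset.mul_sum]
  -- the shifted Cesaro averages also converge to P
  have hshift : ∀ s s' : S,
      Tendsto (fun t : ℕ => (t : ℝ)⁻¹ * ∑ k ∈ Finset.range t, (T ^ (k + 1)) s s')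
        atTop (nhds (P s s')) := by
    intro s s'
    have key : ∀ t : ℕ, (t : ℝ)⁻¹ * ∑ k ∈ Finset.range t, (T ^ (k + 1)) s s'
        = f t s s' + (t : ℝ)⁻¹ * ((T ^ t) s s' - (1 : Matrix S S ℝ) s s') := by
      intro t
      have h1 : ∑ k ∈ Finset.range t, (T ^ (k + 1)) s s'
          = (∑ k ∈ Finset.range t, (T ^ k) s s') + ((T ^ t) s s' - (1 : Matrix S S ℝ) s s') := by
        have h1 : ∑ k ∈ Finset.range (t + 1), (T ^ k) s s'
            = ∑ k ∈ Finset.range t, (T ^ (k + 1)) s s' + (T ^ 0) s s' :=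
          Finset.sum_range_succ' _ t
        have h2 : ∑ k ∈ Finset.range (t + 1), (T ^ k) s s'
            = (∑ k ∈ Finset.range t, (T ^ k) s s') + (T ^ t) s s' :=
          Finset.sum_range_succ _ t
        have h0 : (T ^ 0) s s' = (1 : Matrix S S ℝ) s s' := by norm_num
        rw [h0] at h1
        linarith
      rw [h1, mul_add, hf]
    simp_rw [key]
    have h0 : Tendsto (fun t : ℕ => (t : ℝ)⁻¹ * ((T ^ t) s s' - (1 : Matrix S S ℝ) s s'))
        atTop (nhds 0) := by
      refine squeeze_zero_norm (a := fun t : ℕ => 2 * (t : ℝ)⁻¹) ?_ ?_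
      · intro t
        rw [norm_mul]
        have h1 : ‖(T ^ t) s s' - (1 : Matrix S S ℝ) s s'‖ ≤ 2 := by
          rw [Real.norm_eq_abs]
          have h5 := hpow_nn t s s'
          have h6 := hpow_le t s s'
          have h2 : (0:ℝ) ≤ (1 : Matrix S S ℝ) s s' := by
            by_cases h : s = s' <;> simp [Matrix.one_apply, h]
          have h3 : (1 : Matrix S S ℝ) s s' ≤ 1 := by
            by_cases h : s = s' <;> simp [Matrix.one_apply, h]
          rw [abs_le]; constructor <;> nlinarith
        have h4 : ‖(t:ℝ)⁻¹‖ = (t:ℝ)⁻¹ := by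
          rw [Real.norm_eq_abs, abs_of_nonneg]; positivity
        rw [h4, mul_comm]
        exact mul_le_mul_of_nonneg_right h1 (by positivity)
      · simpa using ((tendsto_inv_atTop_nhds_zero_nat (𝕜 := ℝ)).const_mul 2)
    simpa using (hP s s').add h0
  -- T * P = P
  have hTP : T * P = P := by
    ext s s'
    have h1 : Tendsto (fun t : ℕ => ∑ i, T s i * f t i s') atTop (nhds ((T * P) s s')) := by
      rw [Matrix.mul_apply]
      exact tendsto_finset_sum _ fun i _ => (hP i s').const_mul (T s i)
    have h2 : (fun t : ℕ => ∑ i, T s i * f t i s')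
        = fun t : ℕ => (t : ℝ)⁻¹ * ∑ k ∈ Finset.range t, (T ^ (k + 1)) s s' := by
      funext t
      rw [hL (fun i => T s i) t s']
      congr 1
      refine Finset.sum_congr rfl fun k _ => ?_
      rw [pow_succ', Matrix.mul_apply]
    rw [h2] at h1
    exact tendsto_nhds_unique h1 (hshift s s')
  -- P * T = P
  have hPT : P * T = P := by
    ext s s'
    have h1 : Tendsto (fun t : ℕ => ∑ i, f t s i * T i s') atTop (nhds ((P * T) s s')) := by
      rw [Matrix.mul_apply]
      exact tendsto_finset_sum _ fun i _ => (hP s i).mul_const (T i s')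
    have h2 : (fun t : ℕ => ∑ i, f t s i * T i s')
        = fun t : ℕ => (t : ℝ)⁻¹ * ∑ k ∈ Finset.range t, (T ^ (k + 1)) s s' := by
      funext t
      rw [hR (fun i => T i s') t s]
      congr 1
    rw [h2] at h1
    exact tendsto_nhds_unique h1 (hshift s s')
  -- P * T^k = P
  have hPTk : ∀ k : ℕ, P * T ^ k = P := by
    intro k
    induction k with
    | zero => simp
    | succ k ih => rw [pow_succ, ← mul_assoc, ih, hPT]
  -- P * P = P
  have hPP : P * P = P := by
    ext s s'
    have h1 : Tendsto (fun t : ℕ => ∑ i, P s i * f t i s') atTop (nhds ((P * P) s s')) := by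
      rw [Matrix.mul_apply]
      exact tendsto_finset_sum _ fun i _ => (hP i s').const_mul (P s i)
    have h2 : ∀ t : ℕ, 1 ≤ t → ∑ i, P s i * f t i s' = P s s' := by
      intro t ht
      have htne : (t : ℝ) ≠ 0 := by
        exact_mod_cast Nat.one_le_iff_ne_zero.mp ht
      rw [hL (fun i => P s i) t s']
      have h3 : ∀ k ∈ Finset.range t, ∑ i, P s i * (T ^ k) i s' = P s s' := by
        intro k _
        rw [← Matrix.mul_apply, hPTk]
      rw [Finset.sum_congr rfl h3, Finset.sum_const, Finset.card_range, nsmul_eq_mul,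
        ← mul_assoc, inv_mul_cancel₀ htne, one_mul]
    have h3 : Tendsto (fun t : ℕ => ∑ i, P s i * f t i s') atTop (nhds (P s s')) := by
      apply Tendsto.congr' _ tendsto_const_nhds
      filter_upwards [eventually_ge_atTop 1] with t ht
      exact (h2 t ht).symm
    exact tendsto_nhds_unique h1 h3
  set M : Matrix S S ℝ := 1 - T + P with hM
  -- M is invertible
  have hdet : IsUnit M.det := by
    rw [isUnit_iff_ne_zero]
    intro hd
    obtain ⟨v, hv0, hv⟩ := Matrix.exists_mulVec_eq_zero_iff.mpr hd
    have hv' : v - T.mulVec v + P.mulVec v = 0 := by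
      simpa [hM, Matrix.sub_mulVec, Matrix.add_mulVec, Matrix.one_mulVec] using hv
    have hPv : P.mulVec v = 0 := by
      have h := congrArg (P.mulVec) hv'
      rw [Matrix.mulVec_zero, Matrix.mulVec_add, Matrix.mulVec_sub, Matrix.mulVec_mulVec,
        Matrix.mulVec_mulVec, hPT, hPP] at h
      simpa using h
    have hTv : T.mulVec v = v := by
      have h := hv'
      rw [hPv, add_zero, sub_eq_zero] at h
      exact h.symm
    have hTkv : ∀ k : ℕ, (T ^ k).mulVec v = v := by
      intro k
      induction k with
      | zero => simp
      | succ k ih => rw [pow_succ', ← Matrix.mulVec_mulVec, ih, hTv]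
    apply hv0
    funext s
    have h1 : Tendsto (fun t : ℕ => ∑ i, f t s i * v i) atTop (nhds ((P.mulVec v) s)) := by
      simp only [Matrix.mulVec, dotProduct]
      exact tendsto_finset_sum _ fun i _ => (hP s i).mul_const (v i)
    have h2 : ∀ t : ℕ, 1 ≤ t → ∑ i, f t s i * v i = v s := by
      intro t ht
      have htne : (t : ℝ) ≠ 0 := by
        exact_mod_cast Nat.one_le_iff_ne_zero.mp ht
      rw [hR v t s]
      have h3 : ∀ k ∈ Finset.range t, ∑ i, (T ^ k) s i * v i = v s := by
        intro k _
        have := congrFun (hTkv k) s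
        simpa [Matrix.mulVec, dotProduct] using this
      rw [Finset.sum_congr rfl h3, Finset.sum_const, Finset.card_range, nsmul_eq_mul,
        ← mul_assoc, inv_mul_cancel₀ htne, one_mul]
    have h3 : Tendsto (fun t : ℕ => ∑ i, f t s i * v i) atTop (nhds (v s)) := by
      apply Tendsto.congr' _ tendsto_const_nhds
      filter_upwards [eventually_ge_atTop 1] with t ht
      exact (h2 t ht).symm
    have h4 := tendsto_nhds_unique h3 h1
    rw [h4, hPv]
  have hMinv : M * M⁻¹ = 1 := Matrix.mul_nonsing_inv M hdet
  have hPM : P * M = P := by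
    rw [hM, mul_add, mul_sub, mul_one, hPT, hPP, sub_self, zero_add]
  have hPMinv : P * M⁻¹ = P := by
    calc P * M⁻¹ = (P * M) * M⁻¹ := by rw [hPM]
      _ = P * (M * M⁻¹) := by rw [mul_assoc]
      _ = P := by rw [hMinv, mul_one]
  have h1 : (1 - T) * M⁻¹ = 1 - P := by
    have hMP : (1 : Matrix S S ℝ) - T = M - P := by rw [hM]; abel
    rw [hMP, sub_mul, hPMinv, hMinv]
  have hkey : P + (M⁻¹ * (1 - P) - T * (M⁻¹ * (1 - P))) = 1 := by
    have h2 : M⁻¹ * (1 - P) - T * (M⁻¹ * (1 - P)) = (1 - T) * (M⁻¹ * (1 - P)) := by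
      rw [sub_mul, one_mul]
    rw [h2, ← mul_assoc, h1, sub_mul, one_mul, mul_sub, mul_one, hPP, sub_self, sub_zero]
    abel
  constructor
  · rw [Matrix.mulVec_mulVec, hTP]
  · simp only [Matrix.mulVec_mulVec]
    calc P.mulVec r + (M⁻¹ * (1 - P)).mulVec r - (T * (M⁻¹ * (1 - P))).mulVec r
        = (P + (M⁻¹ * (1 - P) - T * (M⁻¹ * (1 - P)))).mulVec r := by
          rw [Matrix.add_mulVec, Matrix.sub_mulVec]
          abel_nf
      _ = r := by rw [hkey, Matrix.one_mulVec]
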